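/- Let a, b : {0,1}^{m_1} → Z_q be q-ary arrays with generating functions A, B in the variables z_1,…,z_{m_1}, and let c, d : {0,1}^{m_2} → Z_q be q-ary arrays with generating functions C, D in the disjoint variables w_1,…,w_{m_2}. Suppose that for all z ∈ ℂ^{m_1} and w ∈ ℂ^{m_2} with all coordinates nonzero, (A(z)Ā(z⁻¹) + B(z)B̄(z⁻¹))·(C(w)C̄(w⁻¹) + D(w)D̄(w⁻¹)) = 2^{m_1+m_2+2}. Then A(z)Ā(z⁻¹) + B(z)B̄(z⁻¹) = 2^{m_1+1} and C(w)C̄(w⁻¹) + D(w)D̄(w⁻¹) = 2^{m_2+1} for all such z, w; equivalently, (a,b) is a Golay array pair of size 2^(m_1) and (c,d) is a Golay array pair of size 2^(m_2). -/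
import Mathlib


open scoped BigOperators

/-- ζ = exp(2πi/q). -/
noncomputable def zeta (q : ℕ) : ℂ := Complex.exp (2 * Real.pi * Complex.I / q)

/-- ζ^c for c ∈ Z_q (well defined since ζ^q = 1). -/
noncomputable def zetaPow (q : ℕ) (c : ZMod q) : ℂ := zeta q ^ c.val

/-- Aperiodic cross-correlation of arrays u, v at shift τ:
    C_{u,v}(τ) = Σ_{x, x+τ ∈ {0,1}^m} ζ^{u(x+τ) - v(x)}. -/
noncomputable def corr (q m : ℕ) (u v : (Fin m → Fin 2) → ZMod q) (τ : Fin m → ℤ) : ℂ :=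
  ∑ y : Fin m → Fin 2, ∑ x : Fin m → Fin 2,
    if ∀ i, ((y i : ℕ) : ℤ) - ((x i : ℕ) : ℤ) = τ i then zetaPow q (u y - v x) else 0

/-- (f, g) is a Golay array pair of size 2^(m). -/
def IsGAP (q m : ℕ) (f g : (Fin m → Fin 2) → ZMod q) : Prop :=
  ∀ τ : Fin m → ℤ, (∀ i, τ i = -1 ∨ τ i = 0 ∨ τ i = 1) → τ ≠ 0 →
    corr q m f f τ + corr q m g g τ = 0

/-- Generating function of an array, as a function on ℂ^m. -/
noncomputable def genFun (q m : ℕ) (f : (Fin m → Fin 2) → ZMod q) (z : Fin m → ℂ) : ℂ :=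
  ∑ x : Fin m → Fin 2, zetaPow q (f x) * ∏ i, (z i) ^ ((x i : ℕ))

/-- Coefficient-wise conjugate of the generating function, as a function on ℂ^m. -/
noncomputable def genFunConj (q m : ℕ) (f : (Fin m → Fin 2) → ZMod q) (z : Fin m → ℂ) : ℂ :=
  ∑ x : Fin m → Fin 2, (starRingEnd ℂ) (zetaPow q (f x)) * ∏ i, (z i) ^ ((x i : ℕ))

/-- Generating function of an array, as a multivariate polynomial. -/
noncomputable def genPoly (q m : ℕ) (f : (Fin m → Fin 2) → ZMod q) :
    MvPolynomial (Fin m) ℂ :=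
  ∑ x : Fin m → Fin 2, MvPolynomial.C (zetaPow q (f x)) * ∏ i, (MvPolynomial.X i) ^ ((x i : ℕ))

/-- Generating function of an array on a subset S of the coordinates. -/
noncomputable def genPolyOn (q m : ℕ) (S : Finset (Fin m)) (a : (↥S → Fin 2) → ZMod q) :
    MvPolynomial (Fin m) ℂ :=
  ∑ u : ↥S → Fin 2, MvPolynomial.C (zetaPow q (a u)) * ∏ k : ↥S, (MvPolynomial.X (k : Fin m)) ^ ((u k : ℕ))

/-- (f, g) is a standard Golay array pair of size 2^(m). -/
def IsStandard (q m : ℕ) (hm : 0 < m) (f g : (Fin m → Fin 2) → ZMod q) : Prop :=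
  ∃ π : Equiv.Perm (Fin m), ∃ c0 c' : ZMod q, ∃ c : Fin m → ZMod q,
    (∀ x : Fin m → Fin 2,
        f x = ((q / 2 : ℕ) : ZMod q) *
            (∑ k : Fin m, if h : (k : ℕ) + 1 < m then
                ((x (π k) : ℕ) : ZMod q) * ((x (π ⟨(k : ℕ) + 1, h⟩) : ℕ) : ZMod q) else 0)
          + (∑ k : Fin m, c k * ((x k : ℕ) : ZMod q)) + c0)
    ∧ (∀ x : Fin m → Fin 2,
        g x = f x + ((q / 2 : ℕ) : ZMod q) * ((x (π ⟨0, hm⟩) : ℕ) : ZMod q) + c')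

lemma zeta_prim (q : ℕ) (hq : 0 < q) : IsPrimitiveRoot (zeta q) q := by
  simpa [zeta] using Complex.isPrimitiveRoot_exp q hq.ne'

lemma zeta_pow_q (q : ℕ) (hq : 0 < q) : zeta q ^ q = 1 := (zeta_prim q hq).pow_eq_one

lemma zeta_ne_zero (q : ℕ) : zeta q ≠ 0 := Complex.exp_ne_zero _

lemma conj_zeta (q : ℕ) : (starRingEnd ℂ) (zeta q) = (zeta q)⁻¹ := by
  rw [zeta, ← Complex.exp_conj, ← Complex.exp_neg]
  congr 1
  rw [map_div₀, map_mul, map_mul, Complex.conj_I, Complex.conj_ofReal, map_ofNat,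
    Complex.conj_natCast]
  ring

-- zpow congruence

lemma zpow_congr {x : ℂ} (hx : x ≠ 0) {n : ℕ} (hn : x ^ n = 1) {s t : ℤ}
    (h : (n : ℤ) ∣ s - t) : x ^ s = x ^ t := by
  obtain ⟨k, hk⟩ := h
  have : s = t + n * k := by linarith
  rw [this, zpow_add₀ hx, zpow_mul, zpow_natCast, hn, one_zpow, mul_one]

lemma zetaPow_mul_conj (q : ℕ) (hq : 0 < q) (u v : ZMod q) :
    zetaPow q u * (starRingEnd ℂ) (zetaPow q v) = zetaPow q (u - v) := by
  haveI : NeZero q := ⟨hq.ne'⟩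
  have hz := zeta_ne_zero q
  rw [zetaPow, zetaPow, zetaPow, map_pow, conj_zeta, inv_pow, ← zpow_natCast (zeta q) u.val,
    ← zpow_natCast (zeta q) v.val, ← zpow_neg, ← zpow_add₀ hz, ← zpow_natCast (zeta q) (u-v).val]
  apply zpow_congr hz (zeta_pow_q q hq)
  have : ((((u.val:ℤ) + -(v.val:ℤ)) - ((u - v).val : ℤ) : ℤ) : ZMod q) = 0 := by
    push_cast
    simp [ZMod.natCast_val, ZMod.cast_id]
  exact (ZMod.intCast_zmod_eq_zero_iff_dvd _ q).1 this

lemma zetaPow_zero (q : ℕ) : zetaPow q 0 = 1 := by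
  simp [zetaPow, ZMod.val_zero]

lemma omega_cube : zeta 3 ^ 3 = 1 := zeta_pow_q 3 (by norm_num)

lemma omega_ne_one : zeta 3 ≠ 1 :=
  (zeta_prim 3 (by norm_num)).ne_one (by norm_num)

lemma omega_sum : (1 : ℂ) + zeta 3 + zeta 3 ^ 2 = 0 := by
  have h3 := omega_cube
  have h1 : zeta 3 - 1 ≠ 0 := sub_ne_zero.2 omega_ne_one
  have : (zeta 3 - 1) * (1 + zeta 3 + zeta 3 ^ 2) = 0 := by linear_combination h3
  rcases mul_eq_zero.1 this with h | h
  · exact absurd h h1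
  · exact h

lemma sum3 (t : ℤ) (h1 : -2 ≤ t) (h2 : t ≤ 2) :
    ∑ j : Fin 3, ((zeta 3) ^ ((j : ℕ))) ^ t = if t = 0 then 3 else 0 := by
  have hz := zeta_ne_zero 3
  have h3 := omega_cube
  have hs := omega_sum
  rw [Fin.sum_univ_three]
  have hi2 : (zeta 3 ^ 2)⁻¹ = zeta 3 := by
    refine inv_eq_of_mul_eq_one_right ?_
    linear_combination h3
  have hi1 : (zeta 3)⁻¹ = zeta 3 ^ 2 := by
    refine inv_eq_of_mul_eq_one_right ?_
    linear_combination h3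
  have hi4 : ((zeta 3 ^ 2) ^ 2)⁻¹ = zeta 3 ^ 2 := by
    refine inv_eq_of_mul_eq_one_right ?_
    linear_combination (zeta 3 ^ 3 + 1) * h3
  interval_cases t <;>
    simp only [zpow_neg, show ((2:ℤ)) = ((2:ℕ):ℤ) from rfl, show ((1:ℤ)) = ((1:ℕ):ℤ) from rfl,
      zpow_natCast, zpow_zero] <;> norm_num [hi1, hi2, hi4]
  · linear_combination hs
  · linear_combination hs
  · linear_combination hs
  · linear_combination zeta 3 * h3 + hs

lemma sum_prod_swap {m : ℕ} (g : Fin m → Fin 3 → ℂ) :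
    ∑ k : Fin m → Fin 3, ∏ i, g i (k i) = ∏ i, ∑ j, g i j := by
  rw [Finset.prod_univ_sum]
  rw [Fintype.piFinset_univ]

lemma prod_ite_all {m : ℕ} (P : Fin m → Prop) [DecidablePred P] :
    (∏ i, if P i then (3:ℂ) else 0) = if (∀ i, P i) then 3 ^ m else 0 := by
  by_cases h : ∀ i, P i
  · simp [h]
  · rw [if_neg h]
    push_neg at h
    obtain ⟨i, hi⟩ := h
    exact Finset.prod_eq_zero (Finset.mem_univ i) (if_neg hi)

lemma zpow_merge (u : ℂ) (hu : u ≠ 0) (yn xn : ℕ) (t : ℤ) :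
    u ^ yn * (u⁻¹) ^ xn * u ^ (-t) = u ^ ((yn : ℤ) - xn - t) := by
  rw [← zpow_natCast u yn, ← zpow_natCast u⁻¹ xn, inv_zpow, ← zpow_neg, ← zpow_add₀ hu,
    ← zpow_add₀ hu]
  ring_nf

lemma key (q m : ℕ) (hq : 0 < q) (f : (Fin m → Fin 2) → ZMod q) (τ : Fin m → ℤ)
    (hτ : ∀ i, τ i = -1 ∨ τ i = 0 ∨ τ i = 1) :
    ∑ k : Fin m → Fin 3,
      (genFun q m f (fun i => zeta 3 ^ ((k i : ℕ))) *
        genFunConj q m f (fun i => (zeta 3 ^ ((k i : ℕ)))⁻¹)) *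
        ∏ i, ((zeta 3) ^ ((k i : ℕ))) ^ (-τ i)
      = 3 ^ m * corr q m f f τ := by
  have hz := zeta_ne_zero 3
  have step1 : ∀ k : Fin m → Fin 3,
      (genFun q m f (fun i => zeta 3 ^ ((k i : ℕ))) *
        genFunConj q m f (fun i => (zeta 3 ^ ((k i : ℕ)))⁻¹)) *
        ∏ i, ((zeta 3) ^ ((k i : ℕ))) ^ (-τ i)
      = ∑ y : Fin m → Fin 2, ∑ x : Fin m → Fin 2, zetaPow q (f y - f x) *
          ∏ i, ((zeta 3) ^ ((k i : ℕ))) ^ (((y i : ℕ) : ℤ) - ((x i : ℕ) : ℤ) - τ i) := by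
    intro k
    rw [genFun, genFunConj, Finset.sum_mul_sum, Finset.sum_mul]
    refine Finset.sum_congr rfl fun y _ => ?_
    rw [Finset.sum_mul]
    refine Finset.sum_congr rfl fun x _ => ?_
    have hrearr : ∀ p1 c1 p2 c2 p3 : ℂ, (p1 * c1) * (p2 * c2) * p3 = (p1 * p2) * (c1 * c2 * p3) :=
      fun _ _ _ _ _ => by ring
    rw [hrearr, zetaPow_mul_conj q hq, ← Finset.prod_mul_distrib, ← Finset.prod_mul_distrib]
    congr 1
    refine Finset.prod_congr rfl fun i _ => ?_
    exact zpow_merge _ (pow_ne_zero _ hz) _ _ _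
  rw [Finset.sum_congr rfl fun k _ => step1 k]
  rw [Finset.sum_comm]
  rw [corr, Finset.mul_sum]
  refine Finset.sum_congr rfl fun y _ => ?_
  rw [Finset.sum_comm, Finset.mul_sum]
  refine Finset.sum_congr rfl fun x _ => ?_
  rw [← Finset.mul_sum, sum_prod_swap (fun i j => ((zeta 3) ^ ((j : ℕ))) ^ (((y i : ℕ) : ℤ) - ((x i : ℕ) : ℤ) - τ i))]
  have hval : ∀ i, (∑ j : Fin 3, ((zeta 3) ^ ((j : ℕ))) ^ (((y i : ℕ) : ℤ) - ((x i : ℕ) : ℤ) - τ i))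
      = if ((y i : ℕ) : ℤ) - ((x i : ℕ) : ℤ) - τ i = 0 then 3 else 0 := by
    intro i
    refine sum3 _ ?_ ?_
    · have h1 : (y i : ℕ) < 2 := (y i).isLt
      have h2 : (x i : ℕ) < 2 := (x i).isLt
      rcases hτ i with h | h | h <;> omega
    · have h1 : (y i : ℕ) < 2 := (y i).isLt
      have h2 : (x i : ℕ) < 2 := (x i).isLt
      rcases hτ i with h | h | h <;> omega
  rw [Finset.prod_congr rfl fun i _ => hval i, prod_ite_all]
  have hiff : (∀ i, ((y i : ℕ) : ℤ) - ((x i : ℕ) : ℤ) - τ i = 0) ↔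
      (∀ i, ((y i : ℕ) : ℤ) - ((x i : ℕ) : ℤ) = τ i) := by
    constructor <;> intro hh i <;> have := hh i <;> omega
  by_cases hc : ∀ i, ((y i : ℕ) : ℤ) - ((x i : ℕ) : ℤ) = τ i
  · rw [if_pos (hiff.2 hc), if_pos hc]; ring
  · rw [if_neg (fun hh => hc (hiff.1 hh)), if_neg hc]; ring

lemma corr_zero (q m : ℕ) (hq : 0 < q) (f : (Fin m → Fin 2) → ZMod q) :
    corr q m f f 0 = 2 ^ m := by
  rw [corr]
  have hrow : ∀ y : Fin m → Fin 2,
      (∑ x : Fin m → Fin 2, if (∀ i, ((y i : ℕ) : ℤ) - ((x i : ℕ) : ℤ) = (0 : Fin m → ℤ) i)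
        then zetaPow q (f y - f x) else 0) = 1 := by
    intro y
    rw [Finset.sum_eq_single y]
    · rw [if_pos (fun i => by simp), sub_self, zetaPow_zero]
    · intro x _ hxy
      rw [if_neg]
      intro hc
      apply hxy
      funext i
      have := hc i
      simp only [Pi.zero_apply, sub_eq_zero, Nat.cast_inj] at this
      exact (Fin.ext this).symm
    · intro hy
      exact absurd (Finset.mem_univ y) hy
  rw [Finset.sum_congr rfl fun y _ => hrow y]
  simp [Finset.card_univ]

lemma const_sum (m : ℕ) (τ : Fin m → ℤ) (hτ : ∀ i, τ i = -1 ∨ τ i = 0 ∨ τ i = 1) :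
    ∑ k : Fin m → Fin 3, ∏ i, ((zeta 3) ^ ((k i : ℕ))) ^ (-τ i)
      = if τ = 0 then (3 : ℂ) ^ m else 0 := by
  rw [sum_prod_swap (fun i j => ((zeta 3) ^ ((j : ℕ))) ^ (-τ i))]
  have hval : ∀ i, (∑ j : Fin 3, ((zeta 3) ^ ((j : ℕ))) ^ (-τ i))
      = if τ i = 0 then (3:ℂ) else 0 := by
    intro i
    rw [sum3 (-τ i) (by rcases hτ i with h | h | h <;> omega)
      (by rcases hτ i with h | h | h <;> omega)]
    simp [neg_eq_zero]
  rw [Finset.prod_congr rfl fun i _ => hval i, prod_ite_all]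
  congr 1
  simp [funext_iff]

lemma main_aux (q m : ℕ) (hq : 0 < q) (f g : (Fin m → Fin 2) → ZMod q) (α : ℂ)
    (hconst : ∀ z : Fin m → ℂ, (∀ i, z i ≠ 0) →
      genFun q m f z * genFunConj q m f (fun i => (z i)⁻¹)
        + genFun q m g z * genFunConj q m g (fun i => (z i)⁻¹) = α) :
    α = 2 ^ (m + 1) ∧ IsGAP q m f g := by
  have hz := zeta_ne_zero 3
  have h3m : (3 : ℂ) ^ m ≠ 0 := pow_ne_zero _ (by norm_num)
  have key2 : ∀ τ : Fin m → ℤ, (∀ i, τ i = -1 ∨ τ i = 0 ∨ τ i = 1) →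
      (3 : ℂ) ^ m * (corr q m f f τ + corr q m g g τ)
        = α * (if τ = 0 then (3 : ℂ) ^ m else 0) := by
    intro τ hτ
    rw [mul_add, ← key q m hq f τ hτ, ← key q m hq g τ hτ, ← Finset.sum_add_distrib]
    have hterm : ∀ k : Fin m → Fin 3,
        (genFun q m f (fun i => zeta 3 ^ ((k i : ℕ))) *
          genFunConj q m f (fun i => (zeta 3 ^ ((k i : ℕ)))⁻¹)) *
          (∏ i, ((zeta 3) ^ ((k i : ℕ))) ^ (-τ i)) +
        (genFun q m g (fun i => zeta 3 ^ ((k i : ℕ))) *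
          genFunConj q m g (fun i => (zeta 3 ^ ((k i : ℕ)))⁻¹)) *
          (∏ i, ((zeta 3) ^ ((k i : ℕ))) ^ (-τ i))
        = α * ∏ i, ((zeta 3) ^ ((k i : ℕ))) ^ (-τ i) := by
      intro k
      rw [← add_mul, hconst (fun i => zeta 3 ^ ((k i : ℕ))) (fun i => pow_ne_zero _ hz)]
    rw [Finset.sum_congr rfl fun k _ => hterm k, ← Finset.mul_sum, const_sum m τ hτ]
  constructor
  · have h0 := key2 0 (fun i => Or.inr (Or.inl rfl))
    rw [if_pos rfl, corr_zero q m hq f, corr_zero q m hq g] at h0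
    have : (3 : ℂ) ^ m * (2 ^ (m + 1)) = (3 : ℂ) ^ m * α := by
      rw [pow_succ]; linear_combination h0
    exact (mul_left_cancel₀ h3m this).symm
  · intro τ hτ hτ0
    have h1 := key2 τ hτ
    rw [if_neg hτ0, mul_zero] at h1
    rcases mul_eq_zero.1 h1 with h | h
    · exact absurd h h3m
    · exact h

/-- if (AĀ+BB̄)·(CC̄+DD̄) = 2^{m₁+m₂+2} on nonzero points (disjoint
    variables), then AĀ+BB̄ = 2^{m₁+1} and CC̄+DD̄ = 2^{m₂+1}; equivalently (a,b) and
    (c,d) are Golay array pairs. -/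
theorem product_split_gap (q m₁ m₂ : ℕ) (hq : 0 < q)
    (a b : (Fin m₁ → Fin 2) → ZMod q) (c d : (Fin m₂ → Fin 2) → ZMod q)
    (h : ∀ (z : Fin m₁ → ℂ) (w : Fin m₂ → ℂ), (∀ i, z i ≠ 0) → (∀ j, w j ≠ 0) →
      (genFun q m₁ a z * genFunConj q m₁ a (fun i => (z i)⁻¹)
          + genFun q m₁ b z * genFunConj q m₁ b (fun i => (z i)⁻¹)) *
        (genFun q m₂ c w * genFunConj q m₂ c (fun j => (w j)⁻¹)
          + genFun q m₂ d w * genFunConj q m₂ d (fun j => (w j)⁻¹))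
        = (2 : ℂ) ^ (m₁ + m₂ + 2)) :
    (∀ z : Fin m₁ → ℂ, (∀ i, z i ≠ 0) →
      genFun q m₁ a z * genFunConj q m₁ a (fun i => (z i)⁻¹)
        + genFun q m₁ b z * genFunConj q m₁ b (fun i => (z i)⁻¹)
        = (2 : ℂ) ^ (m₁ + 1)) ∧
    (∀ w : Fin m₂ → ℂ, (∀ j, w j ≠ 0) →
      genFun q m₂ c w * genFunConj q m₂ c (fun j => (w j)⁻¹)
        + genFun q m₂ d w * genFunConj q m₂ d (fun j => (w j)⁻¹)
        = (2 : ℂ) ^ (m₂ + 1)) ∧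
    IsGAP q m₁ a b ∧ IsGAP q m₂ c d := by
  have hnz1 : ∀ i : Fin m₁, (fun _ : Fin m₁ => (1:ℂ)) i ≠ 0 := fun _ => one_ne_zero
  have hnz2 : ∀ j : Fin m₂, (fun _ : Fin m₂ => (1:ℂ)) j ≠ 0 := fun _ => one_ne_zero
  have hPP := h (fun _ => 1) (fun _ => 1) hnz1 hnz2
  have hM : ((2:ℂ)) ^ (m₁ + m₂ + 2) ≠ 0 := pow_ne_zero _ two_ne_zero
  have hΨ1 : genFun q m₂ c (fun _ => 1) * genFunConj q m₂ c (fun j => ((1:ℂ))⁻¹)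
      + genFun q m₂ d (fun _ => 1) * genFunConj q m₂ d (fun j => ((1:ℂ))⁻¹) ≠ 0 := by
    intro hc
    exact hM (by rw [← hPP, hc, mul_zero])
  have hΦ1 : genFun q m₁ a (fun _ => 1) * genFunConj q m₁ a (fun i => ((1:ℂ))⁻¹)
      + genFun q m₁ b (fun _ => 1) * genFunConj q m₁ b (fun i => ((1:ℂ))⁻¹) ≠ 0 := by
    intro hc
    exact hM (by rw [← hPP, hc, zero_mul])
  have hconstΦ : ∀ z : Fin m₁ → ℂ, (∀ i, z i ≠ 0) →
      genFun q m₁ a z * genFunConj q m₁ a (fun i => (z i)⁻¹)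
        + genFun q m₁ b z * genFunConj q m₁ b (fun i => (z i)⁻¹)
      = genFun q m₁ a (fun _ => 1) * genFunConj q m₁ a (fun i => ((1:ℂ))⁻¹)
        + genFun q m₁ b (fun _ => 1) * genFunConj q m₁ b (fun i => ((1:ℂ))⁻¹) := by
    intro z hzn
    refine mul_right_cancel₀ hΨ1 ?_
    rw [h z (fun _ => 1) hzn hnz2, hPP]
  have hconstΨ : ∀ w : Fin m₂ → ℂ, (∀ j, w j ≠ 0) →
      genFun q m₂ c w * genFunConj q m₂ c (fun j => (w j)⁻¹)
        + genFun q m₂ d w * genFunConj q m₂ d (fun j => (w j)⁻¹)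
      = genFun q m₂ c (fun _ => 1) * genFunConj q m₂ c (fun j => ((1:ℂ))⁻¹)
        + genFun q m₂ d (fun _ => 1) * genFunConj q m₂ d (fun j => ((1:ℂ))⁻¹) := by
    intro w hwn
    refine mul_left_cancel₀ hΦ1 ?_
    rw [h (fun _ => 1) w hnz1 hwn, hPP]
  obtain ⟨hα, hgap1⟩ := main_aux q m₁ hq a b _ hconstΦ
  obtain ⟨hβ, hgap2⟩ := main_aux q m₂ hq c d _ hconstΨ
  exact ⟨fun z hzn => (hconstΦ z hzn).trans hα,
    fun w hwn => (hconstΨ w hwn).trans hβ, hgap1, hgap2⟩
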